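/- Let (g, ⋆) be a prelie algebra and extend ⋆ to the Oudom–Guin associative product * on S(g) (defined by P * Q = Σ P^{(1)}(P^{(2)} ⋆ Q)). Then for all n ≥ 1, g ⋆ S^n(g) ⊆ S^n(g). -/

import Mathlib

/-!
Oudom–Guin extension of a prelie product. We model the prelie algebra g as the
degree-one component V of S(g) = `MvPolynomial σ K` (σ indexing a basis of g), and
quantify over a bilinear map `star` on S(g) satisfying the defining equations of the
Oudom–Guin extension:
  1 ⋆ P = P,  (xP) ⋆ y = x ⋆ (P ⋆ y) − (x ⋆ P) ⋆ y,  P ⋆ (QR) = Σ (P⁽¹⁾ ⋆ Q)(P⁽²⁾ ⋆ R),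
together with the prelie axioms on g.
-/

open TensorProduct

noncomputable section

/-- The coproduct of the symmetric coalgebra. -/
def scomul (K : Type*) [Field K] (σ : Type*) :
    MvPolynomial σ K →ₐ[K] MvPolynomial σ K ⊗[K] MvPolynomial σ K :=
  MvPolynomial.aeval fun i => MvPolynomial.X i ⊗ₜ[K] 1 + 1 ⊗ₜ[K] MvPolynomial.X i

/-- S_{≥2}(g) = ⊕_{n ≥ 2} S^n(g). -/
def Sge2 (K : Type*) [Field K] (σ : Type*) : Submodule K (MvPolynomial σ K) :=
  ⨆ n : ℕ, ⨆ _ : 2 ≤ n, MvPolynomial.homogeneousSubmodule σ K n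

variable {K : Type*} [Field K] [CharZero K] {σ : Type*}

/-- The hypotheses on `star`: it restricts to a prelie product on g = S¹(g) and satisfies
the defining recursions of the Oudom–Guin extension to S(g). -/
structure IsOGExtension
    (star : MvPolynomial σ K →ₗ[K] MvPolynomial σ K →ₗ[K] MvPolynomial σ K) : Prop where
  one_star : ∀ P : MvPolynomial σ K, star 1 P = P
  mem_g : ∀ x ∈ MvPolynomial.homogeneousSubmodule σ K 1,
    ∀ y ∈ MvPolynomial.homogeneousSubmodule σ K 1,
      star x y ∈ MvPolynomial.homogeneousSubmodule σ K 1
  prelie : ∀ x ∈ MvPolynomial.homogeneousSubmodule σ K 1,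
    ∀ y ∈ MvPolynomial.homogeneousSubmodule σ K 1,
      ∀ z ∈ MvPolynomial.homogeneousSubmodule σ K 1,
        star (star x y) z - star x (star y z) = star (star y x) z - star y (star x z)
  mul_star : ∀ x ∈ MvPolynomial.homogeneousSubmodule σ K 1,
    ∀ P : MvPolynomial σ K, ∀ y ∈ MvPolynomial.homogeneousSubmodule σ K 1,
      star (x * P) y = star x (star P y) - star (star x P) y
  star_mul : ∀ P Q R : MvPolynomial σ K,
    star P (Q * R) =
      LinearMap.mul' K (MvPolynomial σ K)
        (TensorProduct.map (star.flip Q) (star.flip R) (scomul K σ P))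

/-- The associated associative product P * Q = Σ P⁽¹⁾ (P⁽²⁾ ⋆ Q). -/
def ogMul (star : MvPolynomial σ K →ₗ[K] MvPolynomial σ K →ₗ[K] MvPolynomial σ K)
    (P Q : MvPolynomial σ K) : MvPolynomial σ K :=
  LinearMap.mul' K (MvPolynomial σ K)
    (TensorProduct.map LinearMap.id (star.flip Q) (scomul K σ P))


open MvPolynomial in
lemma og_degree_add {σ : Type*} (a b : σ →₀ ℕ) :
    (a + b).degree = a.degree + b.degree := by
  simp only [Finsupp.degree_eq_weight_one]
  exact map_add _ a b

lemma og_degree_single {σ : Type*} (i : σ) : (Finsupp.single i 1 : σ →₀ ℕ).degree = 1 := by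
  rw [Finsupp.degree_apply, Finsupp.support_single_ne_zero _ one_ne_zero, Finset.sum_singleton]
  exact Finsupp.single_eq_same

lemma og_split {σ : Type*} (d : σ →₀ ℕ) (i : σ) (hi : d i ≠ 0) :
    d = Finsupp.single i 1 + (d - Finsupp.single i 1) := by
  ext j
  rcases eq_or_ne i j with rfl | h
  · simp only [Finsupp.coe_add, Pi.add_apply, Finsupp.tsub_apply, Finsupp.single_eq_same]
    omega
  · simp [Finsupp.single_eq_of_ne' h, Finsupp.tsub_apply]

open MvPolynomial in
lemma og_mem_span_X {K : Type*} [Field K] {σ : Type*} (x : MvPolynomial σ K)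
    (hx : x ∈ homogeneousSubmodule σ K 1) :
    x ∈ Submodule.span K (Set.range (X : σ → MvPolynomial σ K)) := by
  rw [← support_sum_monomial_coeff x]
  apply Submodule.sum_mem
  intro d hd
  have hdeg : d.degree = 1 := by
    have := hx (mem_support_iff.mp hd)
    rw [Finsupp.degree_eq_weight_one]; exact this
  have hd0 : d ≠ 0 := by
    intro h; rw [h, map_zero] at hdeg; exact one_ne_zero hdeg.symm
  obtain ⟨i, hi⟩ : ∃ i, d i ≠ 0 := by
    by_contra h; push_neg at h; exact hd0 (Finsupp.ext h)
  have hsingle : d = Finsupp.single i 1 := by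
    have hs := og_split d i hi
    have hadd := og_degree_add (Finsupp.single i 1) (d - Finsupp.single i 1)
    rw [← hs, og_degree_single, hdeg] at hadd
    have h0 : (d - Finsupp.single i 1).degree = 0 := by omega
    rw [Finsupp.degree_eq_zero_iff] at h0
    rw [hs, h0, add_zero]
  rw [hsingle, ← C_mul_X_pow_eq_monomial, pow_one, ← smul_eq_C_mul]
  exact Submodule.smul_mem _ _ (Submodule.subset_span ⟨i, rfl⟩)

open MvPolynomial in
lemma og_scomul_deg1 {K : Type*} [Field K] {σ : Type*} (x : MvPolynomial σ K)
    (hx : x ∈ homogeneousSubmodule σ K 1) :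
    scomul K σ x = x ⊗ₜ[K] 1 + 1 ⊗ₜ[K] x := by
  set D : MvPolynomial σ K →ₗ[K] MvPolynomial σ K ⊗[K] MvPolynomial σ K :=
    (scomul K σ).toLinearMap -
      ((TensorProduct.mk K (MvPolynomial σ K) (MvPolynomial σ K)).flip 1 +
        TensorProduct.mk K (MvPolynomial σ K) (MvPolynomial σ K) 1) with hD
  have hker : Submodule.span K (Set.range (X : σ → MvPolynomial σ K)) ≤ LinearMap.ker D := by
    rw [Submodule.span_le]
    rintro _ ⟨i, rfl⟩
    simp only [SetLike.mem_coe, LinearMap.mem_ker, hD, LinearMap.sub_apply,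
      AlgHom.toLinearMap_apply, LinearMap.add_apply, LinearMap.flip_apply,
      TensorProduct.mk_apply, sub_eq_zero]
    simp [scomul]
  have hDx : D x = 0 := hker (og_mem_span_X x hx)
  simp only [hD, LinearMap.sub_apply, AlgHom.toLinearMap_apply, LinearMap.add_apply,
    LinearMap.flip_apply, TensorProduct.mk_apply, sub_eq_zero] at hDx
  exact hDx

open MvPolynomial in
lemma og_deriv {K : Type*} [Field K] [CharZero K] {σ : Type*}
    (star : MvPolynomial σ K →ₗ[K] MvPolynomial σ K →ₗ[K] MvPolynomial σ K)
    (hstar : IsOGExtension star) (x : MvPolynomial σ K)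
    (hx : x ∈ homogeneousSubmodule σ K 1) (Q R : MvPolynomial σ K) :
    star x (Q * R) = star x Q * R + Q * star x R := by
  rw [hstar.star_mul, og_scomul_deg1 x hx]
  simp [TensorProduct.map_tmul, LinearMap.mul'_apply, LinearMap.flip_apply, hstar.one_star]

/-- for all n ≥ 1, g ⋆ Sⁿ(g) ⊆ Sⁿ(g). -/
theorem stmt3 (star : MvPolynomial σ K →ₗ[K] MvPolynomial σ K →ₗ[K] MvPolynomial σ K)
    (hstar : IsOGExtension star) :
    ∀ n : ℕ, 1 ≤ n → ∀ x ∈ MvPolynomial.homogeneousSubmodule σ K 1,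
      ∀ P ∈ MvPolynomial.homogeneousSubmodule σ K n,
        star x P ∈ MvPolynomial.homogeneousSubmodule σ K n := by
  intro n
  induction n with
  | zero => intro h; exact absurd h (by omega)
  | succ n ih =>
    intro _ x hx P hP
    rw [← MvPolynomial.support_sum_monomial_coeff P, map_sum]
    apply Submodule.sum_mem
    intro d hd
    have hdeg : d.degree = n + 1 := by
      have := hP (MvPolynomial.mem_support_iff.mp hd)
      rw [Finsupp.degree_eq_weight_one]; exact this
    set c := MvPolynomial.coeff d P with hc
    cases n with
    | zero =>
      exact hstar.mem_g x hx _ (MvPolynomial.isHomogeneous_monomial c hdeg)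
    | succ m =>
      have hd0 : d ≠ 0 := by
        intro h; rw [h, map_zero] at hdeg; omega
      obtain ⟨i, hi⟩ : ∃ i, d i ≠ 0 := by
        by_contra h; push_neg at h; exact hd0 (Finsupp.ext h)
      have hs := og_split d i hi
      set d' := d - Finsupp.single i 1 with hd'
      have hmon : (MvPolynomial.monomial d) c = MvPolynomial.X i * MvPolynomial.monomial d' c := by
        rw [MvPolynomial.X, MvPolynomial.monomial_mul, one_mul, ← hs]
      have hd'deg : d'.degree = m + 1 := by
        have hadd := og_degree_add (Finsupp.single i 1) d'
        rw [← hs, og_degree_single, hdeg] at hadd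
        omega
      have hmem' : (MvPolynomial.monomial d') c ∈ MvPolynomial.homogeneousSubmodule σ K (m + 1) :=
        MvPolynomial.isHomogeneous_monomial c hd'deg
      rw [hmon, og_deriv star hstar x hx]
      apply add_mem
      · have h1 : star x (MvPolynomial.X i) ∈ MvPolynomial.homogeneousSubmodule σ K 1 :=
          hstar.mem_g x hx _ (MvPolynomial.isHomogeneous_X K i)
        have := MvPolynomial.IsHomogeneous.mul h1 hmem'
        rwa [Nat.add_comm 1 (m + 1)] at this
      · have h2 := ih (by omega) x hx _ hmem'
        have := MvPolynomial.IsHomogeneous.mul (MvPolynomial.isHomogeneous_X K i) h2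
        rwa [Nat.add_comm 1 (m + 1)] at this
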